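/- Suppose an aSCF ρ has an AS-version R-SEU representation ρ(f,A,s) = Σ_{(q,u)∈SubS} μ(q,u,s)τ_{q,u}(f,A) and there exists a best constant act f̄ (i.e., ρ̄(f,{f,f̄}) = 0 for every constant act f ≠ f̄, equivalently u(f̄) > u(f) for every (q,u) ∈ SubS and constant f ≠ f̄). If all Bernoulli utilities appearing in SubS are positive affine transformations of one another, then ρ satisfies C-Determinism*: for every menu A of constant acts and every f ∈ A, lim_{a→1} ρ̄(af + (1−a)f̄, (A∖{f}) ∪ {af+(1−a)f̄}) ∈ {0,1}. -/

import Mathlib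

open Finset Filter Topology

attribute [local instance] Classical.propDecidable

/-- A simple lottery on `Z`. -/
def IsLottery {Z : Type*} (p : Z →₀ ℝ) : Prop :=
  (∀ z, 0 ≤ p z) ∧ p.sum (fun _ x => x) = 1

/-- `u` is an affine (expected-utility) functional on lotteries. -/
def IsAffineOnLotteries {Z : Type*} (u : (Z →₀ ℝ) → ℝ) : Prop :=
  ∀ p q : Z →₀ ℝ, IsLottery p → IsLottery q → ∀ a : ℝ, 0 ≤ a → a ≤ 1 →
    u (a • p + (1 - a) • q) = a * u p + (1 - a) * u q

lemma mix_lottery {Z : Type*} (p q : Z →₀ ℝ) (hp : IsLottery p) (hq : IsLottery q)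
    (a : ℝ) (h0 : 0 ≤ a) (h1 : a ≤ 1) : IsLottery (a • p + (1 - a) • q) := by
  constructor
  · intro z
    have := hp.1 z; have := hq.1 z
    simp only [Finsupp.add_apply, Finsupp.smul_apply, smul_eq_mul]
    nlinarith
  · rw [Finsupp.sum_add_index' (fun _ => rfl) (fun _ _ _ => rfl),
      Finsupp.sum_smul_index (fun _ => rfl), Finsupp.sum_smul_index (fun _ => rfl),
      ← Finsupp.mul_sum, ← Finsupp.mul_sum, hp.2, hq.2]
    ring

theorem c_determinism_star
    {Z X : Type*} [Fintype X]
    (w : X → ℝ) (hw : ∀ x, 0 < w x) (hw1 : ∑ x, w x = 1)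
    (u : X → (Z →₀ ℝ) → ℝ) (haff : ∀ x, IsAffineOnLotteries (u x))
    -- all Bernoulli utilities are positive affine transformations of one another
    (hposaff : ∀ x y, ∃ a : ℝ, 0 < a ∧ ∃ b : ℝ, ∀ p, IsLottery p → u x p = a * u y p + b)
    -- regular tie-breakers
    (τ : X → (Z →₀ ℝ) → Finset (Z →₀ ℝ) → ℝ)
    (hτreg : ∀ x p A, τ x p A ≠ 0 → p ∈ A ∧ ∀ r ∈ A, u x r ≤ u x p)
    (hτ1 : ∀ x (A : Finset (Z →₀ ℝ)), A.Nonempty → (∀ r ∈ A, IsLottery r) →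
      ∑ p ∈ A, τ x p A = 1)
    -- the marginal stochastic choice function and its representation
    (ρ : (Z →₀ ℝ) → Finset (Z →₀ ℝ) → ℝ)
    (hrep : ∀ p (A : Finset (Z →₀ ℝ)), (∀ r ∈ A, IsLottery r) →
      ρ p A = ∑ x, w x * τ x p A)
    -- the best constant act
    (fbar : Z →₀ ℝ) (hfbarlot : IsLottery fbar)
    (hbest : ∀ x p, IsLottery p → p ≠ fbar → u x p < u x fbar) :
    ∀ A : Finset (Z →₀ ℝ), A.Nonempty → (∀ r ∈ A, IsLottery r) → ∀ f ∈ A,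
      ∃ c : ℝ, (c = 0 ∨ c = 1) ∧
        Tendsto (fun a : ℝ =>
            ρ (a • f + (1 - a) • fbar) ((A.erase f) ∪ {a • f + (1 - a) • fbar}))
          (nhdsWithin 1 (Set.Ico (0 : ℝ) 1)) (nhds c) := by
  intro A hA hAlot f hf
  have hX : Nonempty X := by
    by_contra h
    rw [not_nonempty_iff] at h
    rw [Finset.univ_eq_empty, Finset.sum_empty] at hw1
    exact one_ne_zero hw1.symm
  obtain ⟨x0⟩ := hX
  set B := A.erase f with hBdef
  have hflot : IsLottery f := hAlot f hf
  have hBlot : ∀ g ∈ B, IsLottery g := fun g hg => hAlot g (Finset.erase_subset _ _ hg)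
  -- comparison lemmas
  have hlt : ∀ x (p q : Z →₀ ℝ), IsLottery p → IsLottery q →
      u x0 p < u x0 q → u x p < u x q := by
    intro x p q hp hq h
    obtain ⟨a, ha, b, hb⟩ := hposaff x x0
    rw [hb p hp, hb q hq]
    nlinarith
  have hle' : ∀ x (p q : Z →₀ ℝ), IsLottery p → IsLottery q →
      u x0 p ≤ u x0 q → u x p ≤ u x q := by
    intro x p q hp hq h
    obtain ⟨a, ha, b, hb⟩ := hposaff x x0
    rw [hb p hp, hb q hq]
    nlinarith
  -- abbreviations
  set m : ℝ → (Z →₀ ℝ) := fun a => a • f + (1 - a) • fbar with hmdef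
  have hmlot : ∀ a : ℝ, a ∈ Set.Ico (0:ℝ) 1 → IsLottery (m a) := fun a ha =>
    mix_lottery f fbar hflot hfbarlot a ha.1 ha.2.le
  have hmenu_lot : ∀ a : ℝ, a ∈ Set.Ico (0:ℝ) 1 → ∀ r ∈ B ∪ {m a}, IsLottery r := by
    intro a ha r hr
    rcases Finset.mem_union.mp hr with h | h
    · exact hBlot r h
    · rw [Finset.mem_singleton.mp h]; exact hmlot a ha
  have hmmem : ∀ a : ℝ, m a ∈ B ∪ {m a} := fun a =>
    Finset.mem_union_right _ (Finset.mem_singleton_self _)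
  -- if m a strictly dominates all of B, ρ = 1
  have rho_one : ∀ a : ℝ, a ∈ Set.Ico (0:ℝ) 1 →
      (∀ x, ∀ g ∈ B, g ≠ m a → u x g < u x (m a)) →
      ρ (m a) (B ∪ {m a}) = 1 := by
    intro a ha hdom
    rw [hrep _ _ (hmenu_lot a ha)]
    have hτ : ∀ x, τ x (m a) (B ∪ {m a}) = 1 := by
      intro x
      have hsum := hτ1 x (B ∪ {m a}) ⟨m a, hmmem a⟩ (hmenu_lot a ha)
      rw [Finset.sum_eq_single_of_mem (m a) (hmmem a)] at hsum
      · exact hsum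
      · intro p hp hne
        by_contra hτne
        obtain ⟨_, hmax⟩ := hτreg x p _ hτne
        have hpB : p ∈ B := by
          rcases Finset.mem_union.mp hp with h | h
          · exact h
          · exact absurd (Finset.mem_singleton.mp h) hne
        exact absurd (hmax (m a) (hmmem a)) (not_le.mpr (hdom x p hpB hne))
    simp only [hτ, mul_one]
    exact hw1
  -- if some g in B strictly dominates m a, ρ = 0
  have rho_zero : ∀ a : ℝ, a ∈ Set.Ico (0:ℝ) 1 →
      (∃ g ∈ B, ∀ x, u x (m a) < u x g) →
      ρ (m a) (B ∪ {m a}) = 0 := by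
    intro a ha ⟨g, hgB, hgd⟩
    rw [hrep _ _ (hmenu_lot a ha)]
    have hτ : ∀ x, τ x (m a) (B ∪ {m a}) = 0 := by
      intro x
      by_contra hτne
      obtain ⟨_, hmax⟩ := hτreg x (m a) _ hτne
      exact absurd (hmax g (Finset.mem_union_left _ hgB)) (not_le.mpr (hgd x))
    simp only [hτ, mul_zero, Finset.sum_const_zero]
  by_cases hffbar : f = fbar
  · -- case A : f = fbar, limit 1
    refine ⟨1, Or.inr rfl, ?_⟩
    have key : ∀ a : ℝ, a ∈ Set.Ico (0:ℝ) 1 → ρ (m a) (B ∪ {m a}) = 1 := by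
      intro a ha
      have hma : m a = fbar := by
        rw [hmdef]; simp only [hffbar, ← add_smul]
        rw [show a + (1 - a) = 1 by ring, one_smul]
      apply rho_one a ha
      intro x g hgB hne
      rw [hma]
      exact hbest x g (hBlot g hgB) (by rw [hma] at hne; exact hne)
    refine Tendsto.congr' ?_ tendsto_const_nhds
    filter_upwards [eventually_mem_nhdsWithin] with a ha
    exact (key a ha).symm
  · have hdpos : 0 < u x0 fbar - u x0 f := sub_pos.mpr (hbest x0 f hflot hffbar)
    by_cases hcase : ∀ g ∈ B, u x0 g ≤ u x0 f
    · -- case B : limit 1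
      refine ⟨1, Or.inr rfl, ?_⟩
      have key : ∀ a : ℝ, a ∈ Set.Ico (0:ℝ) 1 → ρ (m a) (B ∪ {m a}) = 1 := by
        intro a ha
        apply rho_one a ha
        intro x g hgB _
        have h1 : u x g ≤ u x f := hle' x g f (hBlot g hgB) hflot (hcase g hgB)
        have h2 : u x (m a) = a * u x f + (1 - a) * u x fbar :=
          haff x f fbar hflot hfbarlot a ha.1 ha.2.le
        have h3 : u x f < u x fbar := hbest x f hflot hffbar
        nlinarith [ha.1, ha.2]
      refine Tendsto.congr' ?_ tendsto_const_nhds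
      filter_upwards [eventually_mem_nhdsWithin] with a ha
      exact (key a ha).symm
    · -- case C : limit 0
      push_neg at hcase
      obtain ⟨g, hgB, hgf⟩ := hcase
      refine ⟨0, Or.inl rfl, ?_⟩
      set d := u x0 fbar - u x0 f with hd
      set ε := u x0 g - u x0 f with hε
      have hεpos : 0 < ε := sub_pos.mpr hgf
      have hthr : (1 : ℝ) - ε / d < 1 := by
        have : 0 < ε / d := div_pos hεpos hdpos
        linarith
      have key : ∀ a : ℝ, a ∈ Set.Ico (0:ℝ) 1 → 1 - ε / d < a →
          ρ (m a) (B ∪ {m a}) = 0 := by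
        intro a ha hagt
        apply rho_zero a ha
        refine ⟨g, hgB, fun x => ?_⟩
        apply hlt x (m a) g (hmlot a ha) (hBlot g hgB)
        have h2 : u x0 (m a) = a * u x0 f + (1 - a) * u x0 fbar :=
          haff x0 f fbar hflot hfbarlot a ha.1 ha.2.le
        have h4 : (1 - a) * d < ε := by
          have h5 : 1 - a < ε / d := by linarith
          calc (1 - a) * d < (ε / d) * d := by
                exact mul_lt_mul_of_pos_right h5 hdpos
            _ = ε := by field_simp
        rw [h2]; rw [hd] at h4; rw [hε] at *
        nlinarith
      refine Tendsto.congr' ?_ tendsto_const_nhds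
      have hev : ∀ᶠ a in nhdsWithin (1:ℝ) (Set.Ico (0:ℝ) 1), 1 - ε / d < a :=
        Filter.Eventually.filter_mono nhdsWithin_le_nhds (eventually_gt_nhds hthr)
      filter_upwards [eventually_mem_nhdsWithin, hev] with a ha hagt
      exact (key a ha hagt).symm
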